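/- arXiv:2509.23405 — 2 statements merged into one kernel-verified Lean document; each statement's English description precedes it below -/
import Mathlib

section
/- Uniform planner recovers the vanilla DLM ELBO: suppose the planner is uniform over masked positions, i.e., Cat(i; G(z, x)) = 1/N_M(x) for every i with x^i = m and 0 otherwise, independently of z. Then F(x, x_0^i, i) = 1/N_M(x) for every masked i, the term 𝓔_2(x_0) of the planner-aware ELBO vanishes, the reference chain distribution r^G_k(·; x_0) is the uniform distribution on 𝓧_{L-k}(x_0), and the planner-aware lower bound for any sequence x_0 with no masks equals the vanilla masked-diffusion ELBO: log p^{unif}(x_0) ≥ L · E_{k ~ Unif({0,...,L-1})} E_{x_k ~ Unif(𝓧_{L-k}(x_0))}[ Σ_{i : x_k^i = m} (1/(L-k)) · log Cat( x_0^i; D^i(x_k) ) ]. -/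
open Finset

/-- `Fplan D G x y i = E_{z ~ D(x)}[ Cat(i ; G(z^{-i,y}, x)) ]`, the coordinates of `z`
being sampled independently, `z^j ~ D^j(x)`. -/
noncomputable def Fplan {V : Type*} [Fintype V] [DecidableEq V] {L : ℕ}
    (D : (Fin L → V) → Fin L → V → ℝ)
    (G : (Fin L → V) → (Fin L → V) → Fin L → ℝ)
    (x : Fin L → V) (y : V) (i : Fin L) : ℝ :=
  ∑ z : Fin L → V, (∏ j, D x j (z j)) * G (Function.update z i y) x i

/-- One step of planner-guided sampling. -/
noncomputable def stepKernel {V : Type*} [Fintype V] [DecidableEq V] {L : ℕ}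
    (D : (Fin L → V) → Fin L → V → ℝ)
    (G : (Fin L → V) → (Fin L → V) → Fin L → ℝ)
    (x w : Fin L → V) : ℝ :=
  ∑ z : Fin L → V, (∏ j, D x j (z j)) *
    ∑ i ∈ Finset.univ.filter (fun i : Fin L => Function.update x i (z i) = w), G z x i

/-- The distribution of the state after `k` steps of planner-guided sampling,
starting from the fully masked sequence; `sampleDist D G mask L` is `p^G`. -/
noncomputable def sampleDist {V : Type*} [Fintype V] [DecidableEq V] {L : ℕ}
    (D : (Fin L → V) → Fin L → V → ℝ)
    (G : (Fin L → V) → (Fin L → V) → Fin L → ℝ)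
    (mask : V) : ℕ → (Fin L → V) → ℝ
  | 0, w => if w = (fun _ => mask) then (1 : ℝ) else 0
  | k + 1, w => ∑ x : Fin L → V, sampleDist D G mask k x * stepKernel D G x w

/-- The step-`k` law `r^G_k(·; x₀)` of the reference chain `Y^{x₀}` driven by the
planner `G(x₀, ·)`. -/
noncomputable def refDist {V : Type*} [Fintype V] [DecidableEq V] {L : ℕ}
    (G : (Fin L → V) → (Fin L → V) → Fin L → ℝ)
    (mask : V) (x0 : Fin L → V) : ℕ → (Fin L → V) → ℝ
  | 0, w => if w = (fun _ => mask) then (1 : ℝ) else 0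
  | k + 1, w => ∑ x : Fin L → V,
      refDist G mask x0 k x *
        ∑ i ∈ Finset.univ.filter
            (fun i : Fin L => x i = mask ∧ Function.update x i (x0 i) = w),
          G x0 x i

/-- `N_M(x)`: the number of masked coordinates of `x`. -/
def NMask {V : Type*} [Fintype V] [DecidableEq V] {L : ℕ}
    (mask : V) (x : Fin L → V) : ℕ :=
  (Finset.univ.filter (fun i : Fin L => x i = mask)).card

/-- `𝓧_j(x₀)`: the set of sequences equal to `x₀` except that exactly `j` coordinates
are replaced by the mask symbol. -/
def XSet {V : Type*} [Fintype V] [DecidableEq V] {L : ℕ}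
    (mask : V) (x0 : Fin L → V) (j : ℕ) : Finset (Fin L → V) :=
  Finset.univ.filter (fun x : Fin L → V =>
    (∀ i, x i = x0 i ∨ x i = mask) ∧ NMask mask x = j)

set_option linter.unusedSectionVars false


section
variable {V : Type*} [Fintype V] [DecidableEq V] {L : ℕ}

/-- sum over all functions of product of per-coordinate weights -/
lemma sum_prod_one (D : Fin L → V → ℝ) (hD1 : ∀ i, ∑ y, D i y = 1) :
    ∑ z : Fin L → V, ∏ j, D j (z j) = 1 := by
  rw [← Fintype.prod_sum (f := D)]
  simp [hD1]

lemma fiber_prod (D : Fin L → V → ℝ) (hD1 : ∀ i, ∑ y, D i y = 1) (i : Fin L) (y : V) :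
    ∑ z ∈ Finset.univ.filter (fun z : Fin L → V => z i = y), ∏ j, D j (z j) = D i y := by
  have hset : Finset.univ.filter (fun z : Fin L → V => z i = y)
      = Fintype.piFinset (Function.update (fun _ : Fin L => (Finset.univ : Finset V)) i {y}) := by
    ext z
    simp only [Finset.mem_filter, Finset.mem_univ, true_and, Fintype.mem_piFinset]
    constructor
    · intro h j
      rcases eq_or_ne j i with rfl | hj
      · simp [h]
      · simp [Function.update_of_ne hj]
    · intro h
      have := h i
      simpa using this
  rw [hset, ← Finset.prod_univ_sum]
  rw [Finset.prod_eq_single i]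
  · simp
  · intro j _ hj
    simp [Function.update_of_ne hj, hD1]
  · simp

lemma marginal (D : Fin L → V → ℝ) (hD1 : ∀ i, ∑ y, D i y = 1) (i : Fin L) (f : V → ℝ) :
    ∑ z : Fin L → V, (∏ j, D j (z j)) * f (z i) = ∑ y, D i y * f y := by
  rw [← Finset.sum_fiberwise (univ : Finset (Fin L → V)) (fun z => z i)
      (fun z => (∏ j, D j (z j)) * f (z i))]
  refine Finset.sum_congr rfl fun y _ => ?_
  have : ∑ z ∈ Finset.univ.filter (fun z : Fin L → V => z i = y),
      (∏ j, D j (z j)) * f (z i)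
      = ∑ z ∈ Finset.univ.filter (fun z : Fin L → V => z i = y), (∏ j, D j (z j)) * f y := by
    refine Finset.sum_congr rfl fun z hz => ?_
    rw [(Finset.mem_filter.1 hz).2]
  rw [this, ← Finset.sum_mul, fiber_prod D hD1]

end

section
variable {V : Type*} [Fintype V] [DecidableEq V] {L : ℕ} {mask : V} {x0 : Fin L → V}

lemma mem_XSet {x : Fin L → V} {j : ℕ} :
    x ∈ XSet mask x0 j ↔ (∀ i, x i = x0 i ∨ x i = mask) ∧ NMask mask x = j := by
  simp [XSet]

variable (hx0 : ∀ i, x0 i ≠ mask)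
include hx0

lemma update_unmask_mem {x : Fin L → V} {j : ℕ} (hx : x ∈ XSet mask x0 (j + 1))
    {i : Fin L} (hi : x i = mask) : Function.update x i (x0 i) ∈ XSet mask x0 j := by
  obtain ⟨hsh, hn⟩ := mem_XSet.1 hx
  refine mem_XSet.2 ⟨?_, ?_⟩
  · intro i'
    rcases eq_or_ne i' i with rfl | h
    · simp
    · simpa [Function.update_of_ne h] using hsh i'
  · have hfil : Finset.univ.filter (fun i' : Fin L => Function.update x i (x0 i) i' = mask)
        = (Finset.univ.filter (fun i' : Fin L => x i' = mask)).erase i := by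
      ext i'
      rcases eq_or_ne i' i with rfl | h
      · simp [hx0 i']
      · simp [Function.update_of_ne h, h]
    simp only [NMask, hfil]
    rw [Finset.card_erase_of_mem (by simp [hi])]
    simp only [NMask] at hn
    omega

lemma update_mask_mem {w : Fin L → V} {j : ℕ} (hw : w ∈ XSet mask x0 j)
    {i : Fin L} (hi : w i ≠ mask) : Function.update w i mask ∈ XSet mask x0 (j + 1) := by
  obtain ⟨hsh, hn⟩ := mem_XSet.1 hw
  refine mem_XSet.2 ⟨?_, ?_⟩
  · intro i'
    rcases eq_or_ne i' i with rfl | h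
    · simp
    · simpa [Function.update_of_ne h] using hsh i'
  · have hfil : Finset.univ.filter (fun i' : Fin L => Function.update w i mask i' = mask)
        = insert i (Finset.univ.filter (fun i' : Fin L => w i' = mask)) := by
      ext i'
      rcases eq_or_ne i' i with rfl | h
      · simp
      · simp [Function.update_of_ne h, h]
    simp only [NMask, hfil]
    rw [Finset.card_insert_of_notMem (by simp [hi])]
    simp only [NMask] at hn
    omega

/-- reindexing pairs (x, masked position i) of `XSet (j+1)` by unmasking. -/
lemma reindex (j : ℕ) (f : (Fin L → V) → ℝ) :
    ∑ x ∈ XSet mask x0 (j + 1), ∑ i ∈ Finset.univ.filter (fun i : Fin L => x i = mask),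
        f (Function.update x i (x0 i))
      = ∑ w ∈ XSet mask x0 j, ((L - j : ℕ) : ℝ) * f w := by
  have key : ∀ w ∈ XSet mask x0 j,
      ((L - j : ℕ) : ℝ) * f w
        = ∑ i ∈ Finset.univ.filter (fun i : Fin L => w i ≠ mask), f w := by
    intro w hw
    obtain ⟨hsh, hn⟩ := mem_XSet.1 hw
    rw [Finset.sum_const, nsmul_eq_mul]
    congr 2
    have : Finset.univ.filter (fun i : Fin L => w i ≠ mask)
        = (Finset.univ.filter (fun i : Fin L => w i = mask))ᶜ := by
      ext i; simp
    rw [this, Finset.card_compl]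
    simp only [NMask] at hn
    simp [hn]
  rw [Finset.sum_congr rfl key]
  rw [Finset.sum_sigma', Finset.sum_sigma']
  refine Finset.sum_nbij' (fun p => ⟨Function.update p.1 p.2 (x0 p.2), p.2⟩)
    (fun p => ⟨Function.update p.1 p.2 mask, p.2⟩) ?_ ?_ ?_ ?_ ?_
  · rintro ⟨x, i⟩ hp
    simp only [Finset.mem_sigma, Finset.mem_filter, Finset.mem_univ, true_and] at hp ⊢
    obtain ⟨hx, hi⟩ := hp
    exact ⟨update_unmask_mem hx0 hx hi, by simp [hx0]⟩
  · rintro ⟨w, i⟩ hp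
    simp only [Finset.mem_sigma, Finset.mem_filter, Finset.mem_univ, true_and] at hp ⊢
    obtain ⟨hw, hi⟩ := hp
    exact ⟨update_mask_mem hx0 hw hi, by simp⟩
  · rintro ⟨x, i⟩ hp
    simp only [Finset.mem_sigma, Finset.mem_filter, Finset.mem_univ, true_and] at hp
    obtain ⟨hx, hi⟩ := hp
    simp only [Sigma.mk.inj_iff, heq_eq_eq, and_true]
    rw [Function.update_idem]
    funext i'
    rcases eq_or_ne i' i with rfl | h
    · simp [hi]
    · simp [Function.update_of_ne h]
  · rintro ⟨w, i⟩ hp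
    simp only [Finset.mem_sigma, Finset.mem_filter, Finset.mem_univ, true_and] at hp
    obtain ⟨hw, hi⟩ := hp
    have hsh := (mem_XSet.1 hw).1
    simp only [Sigma.mk.inj_iff, heq_eq_eq, and_true]
    rw [Function.update_idem]
    have : x0 i = w i := by
      rcases hsh i with h | h
      · exact h.symm
      · exact absurd h hi
    rw [this, Function.update_eq_self]
  · rintro ⟨x, i⟩ _; rfl

lemma card_identity (j : ℕ) :
    ((XSet mask x0 (j + 1)).card : ℝ) * ((j : ℝ) + 1)
      = ((XSet mask x0 j).card : ℝ) * ((L - j : ℕ) : ℝ) := by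
  have := reindex hx0 (mask := mask) (x0 := x0) j (fun _ => (1 : ℝ))
  simp only [mul_one, Finset.sum_const, nsmul_eq_mul] at this
  have lhs : ∑ x ∈ XSet mask x0 (j + 1),
      ((Finset.univ.filter (fun i : Fin L => x i = mask)).card : ℝ)
      = ((XSet mask x0 (j + 1)).card : ℝ) * ((j : ℝ) + 1) := by
    rw [Finset.sum_congr rfl (fun x hx => ?_), Finset.sum_const, nsmul_eq_mul]
    have hn := (mem_XSet.1 hx).2
    simp only [NMask] at hn
    rw [hn]
    push_cast
    ring
  rw [lhs] at this
  exact this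

lemma XSet_nonempty {j : ℕ} (hj : j ≤ L) : (XSet mask x0 j).Nonempty := by
  obtain ⟨t, -, ht⟩ := Finset.exists_subset_card_eq (s := (Finset.univ : Finset (Fin L)))
    (n := j) (by simpa using hj)
  refine ⟨fun i => if i ∈ t then mask else x0 i, mem_XSet.2 ⟨?_, ?_⟩⟩
  · intro i; by_cases h : i ∈ t <;> simp [h]
  · have : Finset.univ.filter
        (fun i : Fin L => (if i ∈ t then mask else x0 i) = mask) = t := by
      ext i
      by_cases h : i ∈ t <;> simp [h, hx0 i]
    simp only [NMask, this, ht]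

lemma XSet_L : XSet mask x0 L = {fun _ => mask} := by
  ext x
  simp only [Finset.mem_singleton]
  constructor
  · intro hx
    obtain ⟨-, hn⟩ := mem_XSet.1 hx
    simp only [NMask] at hn
    have : Finset.univ.filter (fun i : Fin L => x i = mask) = Finset.univ :=
      Finset.eq_univ_of_card _ (by simpa using hn)
    funext i
    have hi : i ∈ Finset.univ.filter (fun i : Fin L => x i = mask) := by
      rw [this]; exact Finset.mem_univ i
    exact (Finset.mem_filter.1 hi).2
  · rintro rfl
    exact mem_XSet.2 ⟨fun i => Or.inr rfl, by simp [NMask]⟩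

lemma mem_XSet_zero {x : Fin L → V} : x ∈ XSet mask x0 0 ↔ x = x0 := by
  constructor
  · intro hx
    obtain ⟨hsh, hn⟩ := mem_XSet.1 hx
    simp only [NMask, Finset.card_eq_zero, Finset.filter_eq_empty_iff] at hn
    funext i
    rcases hsh i with h | h
    · exact h
    · exact absurd h (by simpa using hn (Finset.mem_univ i))
  · rintro rfl
    refine mem_XSet.2 ⟨fun i => Or.inl rfl, ?_⟩
    simp only [NMask, Finset.card_eq_zero, Finset.filter_eq_empty_iff]
    intro i _
    exact hx0 i

end



section
variable {V : Type*} [Fintype V] [DecidableEq V] {L : ℕ} {mask : V}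
  {D : (Fin L → V) → Fin L → V → ℝ}
  {G : (Fin L → V) → (Fin L → V) → Fin L → ℝ}
  {x0 : Fin L → V}

lemma Fplan_eq (hD1 : ∀ x i, ∑ y, D x i y = 1)
    (hG : ∀ z x i, G z x i = if x i = mask then ((NMask mask x : ℝ))⁻¹ else 0)
    (x : Fin L → V) (y : V) (i : Fin L) :
    Fplan D G x y i = if x i = mask then ((NMask mask x : ℝ))⁻¹ else 0 := by
  unfold Fplan
  simp only [hG]
  rw [← Finset.sum_mul, sum_prod_one _ (hD1 x), one_mul]

lemma refDist_uniform
    (hG : ∀ z x i, G z x i = if x i = mask then ((NMask mask x : ℝ))⁻¹ else 0)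
    (hx0 : ∀ i, x0 i ≠ mask) :
    ∀ k, k ≤ L → ∀ w : Fin L → V,
      refDist G mask x0 k w =
        if w ∈ XSet mask x0 (L - k) then ((XSet mask x0 (L - k)).card : ℝ)⁻¹ else 0 := by
  intro k
  induction k with
  | zero =>
    intro _ w
    simp only [refDist, Nat.sub_zero, XSet_L (hx0 := hx0)]
    simp
  | succ k IH =>
    intro hk w
    have hkL : k < L := hk
    have hIH := IH (le_of_lt hkL)
    have hLk : L - k - 1 + 1 = L - k := by omega
    have hsub : L - (k + 1) = L - k - 1 := by omega
    -- unfold one step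
    simp only [refDist]
    -- apply IH
    have h1 : ∀ x : Fin L → V,
        refDist G mask x0 k x *
            (∑ i ∈ Finset.univ.filter
                (fun i : Fin L => x i = mask ∧ Function.update x i (x0 i) = w), G x0 x i)
          = if x ∈ XSet mask x0 (L - k) then
              ((XSet mask x0 (L - k)).card : ℝ)⁻¹ *
                (∑ i ∈ Finset.univ.filter
                  (fun i : Fin L => x i = mask ∧ Function.update x i (x0 i) = w), G x0 x i)
            else 0 := by
      intro x
      rw [hIH x]
      split_ifs <;> simp
    rw [Finset.sum_congr rfl fun x _ => h1 x, Finset.sum_ite_mem, Finset.univ_inter]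
    -- simplify the inner sum for x ∈ XSet
    have h2 : ∀ x ∈ XSet mask x0 (L - k),
        ((XSet mask x0 (L - k)).card : ℝ)⁻¹ *
            (∑ i ∈ Finset.univ.filter
              (fun i : Fin L => x i = mask ∧ Function.update x i (x0 i) = w), G x0 x i)
          = ((XSet mask x0 (L - k)).card : ℝ)⁻¹ * (((L - k : ℕ) : ℝ))⁻¹ *
              ∑ i ∈ Finset.univ.filter (fun i : Fin L => x i = mask),
                (if Function.update x i (x0 i) = w then (1 : ℝ) else 0) := by
      intro x hx
      have hn := (mem_XSet.1 hx).2
      rw [mul_assoc]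
      congr 1
      rw [Finset.mul_sum, ← Finset.filter_filter, Finset.sum_filter]
      refine Finset.sum_congr rfl fun i hi => ?_
      have hi' : x i = mask := by simpa using (Finset.mem_filter.1 hi).2
      rw [hG, if_pos hi', hn]
      by_cases h : Function.update x i (x0 i) = w <;> simp [h]
    rw [Finset.sum_congr rfl h2, ← Finset.mul_sum]
    -- reindex
    have hre := reindex (hx0 := hx0) (L - k - 1) (fun u => if u = w then (1 : ℝ) else 0)
    rw [hLk] at hre
    rw [hre]
    have hnum : L - (L - k - 1) = k + 1 := by omega
    rw [hnum]
    have hsum : (∑ u ∈ XSet mask x0 (L - k - 1), ((k + 1 : ℕ) : ℝ) *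
        (if u = w then (1 : ℝ) else 0))
        = if w ∈ XSet mask x0 (L - k - 1) then ((k + 1 : ℕ) : ℝ) else 0 := by
      simp only [mul_ite, mul_one, mul_zero]
      rw [Finset.sum_ite_eq' (XSet mask x0 (L - k - 1)) w (fun _ => ((k + 1 : ℕ) : ℝ))]
    rw [hsum, hsub]
    by_cases hw : w ∈ XSet mask x0 (L - k - 1)
    · rw [if_pos hw, if_pos hw]
      have hcI := card_identity (hx0 := hx0) (L - k - 1)
      rw [hLk] at hcI
      have hcast : ((L - k - 1 : ℕ) : ℝ) + 1 = ((L - k : ℕ) : ℝ) := by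
        rw [← hLk]; push_cast; ring
      rw [hcast, hnum] at hcI
      have hc0 : ((XSet mask x0 (L - k)).card : ℝ) ≠ 0 := by
        obtain ⟨xx, hxx⟩ := XSet_nonempty (hx0 := hx0) (j := L - k) (by omega)
        exact Nat.cast_ne_zero.2 (Finset.card_ne_zero_of_mem hxx)
      have hc0' : ((XSet mask x0 (L - k - 1)).card : ℝ) ≠ 0 :=
        Nat.cast_ne_zero.2 (Finset.card_ne_zero_of_mem hw)
      have hLk0 : ((L - k : ℕ) : ℝ) ≠ 0 := by
        have : (0 : ℕ) < L - k := by omega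
        exact Nat.cast_ne_zero.2 (by omega)
      have hk0 : ((k + 1 : ℕ) : ℝ) ≠ 0 := Nat.cast_ne_zero.2 (by omega)
      push_cast at hcI ⊢
      field_simp
      linear_combination -hcI
    · rw [if_neg hw, if_neg hw, mul_zero]

end

/-- reach probability: `reachP D G x0 j x` is the probability of being at `x0` after
`j` more steps starting from `x`. -/
noncomputable def reachP {V : Type*} [Fintype V] [DecidableEq V] {L : ℕ}
    (D : (Fin L → V) → Fin L → V → ℝ)
    (G : (Fin L → V) → (Fin L → V) → Fin L → ℝ)
    (x0 : Fin L → V) : ℕ → (Fin L → V) → ℝ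
  | 0, x => if x = x0 then 1 else 0
  | j + 1, x => ∑ w : Fin L → V, stepKernel D G x w * reachP D G x0 j w

/-- the recursive lower bound used in the ELBO. -/
noncomputable def hLB {V : Type*} [Fintype V] [DecidableEq V] {L : ℕ}
    (D : (Fin L → V) → Fin L → V → ℝ) (mask : V)
    (x0 : Fin L → V) : ℕ → (Fin L → V) → ℝ
  | 0, _ => 0
  | j + 1, x => ((j : ℝ) + 1)⁻¹ *
      ∑ i ∈ Finset.univ.filter (fun i : Fin L => x i = mask),
        (Real.log (D x i (x0 i)) + hLB D mask x0 j (Function.update x i (x0 i)))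

section
variable {V : Type*} [Fintype V] [DecidableEq V] {L : ℕ} {mask : V}
  {D : (Fin L → V) → Fin L → V → ℝ}
  {G : (Fin L → V) → (Fin L → V) → Fin L → ℝ}
  {x0 : Fin L → V}

lemma sampleDist_reach :
    ∀ k j : ℕ, (∑ x : Fin L → V, sampleDist D G mask k x * reachP D G x0 j x)
      = reachP D G x0 (k + j) (fun _ => mask) := by
  intro k
  induction k with
  | zero =>
    intro j
    simp only [sampleDist, Nat.zero_add, ite_mul, one_mul, zero_mul]
    rw [Finset.sum_ite_eq' Finset.univ (fun _ => mask) (reachP D G x0 j)]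
    simp
  | succ k IH =>
    intro j
    simp only [sampleDist, Finset.sum_mul]
    rw [Finset.sum_comm]
    have : ∀ y : Fin L → V,
        (∑ x : Fin L → V, sampleDist D G mask k y * stepKernel D G y x * reachP D G x0 j x)
          = sampleDist D G mask k y * reachP D G x0 (j + 1) y := by
      intro y
      show _ = sampleDist D G mask k y * ∑ w : Fin L → V, stepKernel D G y w * reachP D G x0 j w
      rw [Finset.mul_sum]
      exact Finset.sum_congr rfl fun x _ => by ring
    rw [Finset.sum_congr rfl fun y _ => this y, IH (j + 1)]
    congr 1
    omega

lemma sdist_eq_reach : sampleDist D G mask L x0 = reachP D G x0 L (fun _ => mask) := by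
  have h := sampleDist_reach (mask := mask) (D := D) (G := G) (x0 := x0) L 0
  simp only [reachP, Nat.add_zero, mul_ite, mul_one, mul_zero] at h
  rw [Finset.sum_ite_eq' Finset.univ x0 (sampleDist D G mask L)] at h
  simpa using h

lemma step_reach (x : Fin L → V) (C : (Fin L → V) → ℝ) :
    ∑ w : Fin L → V, stepKernel D G x w * C w
      = ∑ z : Fin L → V, (∏ j, D x j (z j)) *
          ∑ i : Fin L, G z x i * C (Function.update x i (z i)) := by
  simp only [stepKernel, Finset.sum_mul]
  rw [Finset.sum_comm]
  refine Finset.sum_congr rfl fun z _ => ?_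
  have h1 : ∀ w : Fin L → V,
      (∏ j, D x j (z j)) *
          (∑ i ∈ Finset.univ.filter (fun i : Fin L => Function.update x i (z i) = w),
            G z x i) * C w
        = (∏ j, D x j (z j)) *
            ∑ i ∈ Finset.univ.filter (fun i : Fin L => Function.update x i (z i) = w),
              G z x i * C (Function.update x i (z i)) := by
    intro w
    rw [mul_assoc, Finset.sum_mul]
    congr 1
    exact Finset.sum_congr rfl fun i hi => by rw [(Finset.mem_filter.1 hi).2]
  rw [Finset.sum_congr rfl fun w _ => h1 w, ← Finset.mul_sum]
  congr 1
  exact Finset.sum_fiberwise Finset.univ (fun i => Function.update x i (z i))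
    (fun i => G z x i * C (Function.update x i (z i)))

lemma reachP_succ (hD1 : ∀ x i, ∑ y, D x i y = 1)
    (hG : ∀ z x i, G z x i = if x i = mask then ((NMask mask x : ℝ))⁻¹ else 0)
    (j : ℕ) (x : Fin L → V) :
    reachP D G x0 (j + 1) x
      = ∑ i ∈ Finset.univ.filter (fun i : Fin L => x i = mask),
          ((NMask mask x : ℝ))⁻¹ * ∑ y, D x i y * reachP D G x0 j (Function.update x i y) := by
  show (∑ w : Fin L → V, stepKernel D G x w * reachP D G x0 j w) = _
  rw [step_reach]
  have h1 : ∀ z : Fin L → V,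
      (∑ i : Fin L, G z x i * reachP D G x0 j (Function.update x i (z i)))
        = ∑ i ∈ Finset.univ.filter (fun i : Fin L => x i = mask),
            ((NMask mask x : ℝ))⁻¹ * reachP D G x0 j (Function.update x i (z i)) := by
    intro z
    rw [Finset.sum_filter]
    refine Finset.sum_congr rfl fun i _ => ?_
    rw [hG]
    split_ifs <;> simp
  rw [Finset.sum_congr rfl fun z _ => by rw [h1 z]]
  rw [Finset.sum_congr rfl fun z _ => Finset.mul_sum _ _ _]
  rw [Finset.sum_comm]
  refine Finset.sum_congr rfl fun i _ => ?_
  have h2 : ∀ z : Fin L → V,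
      (∏ j', D x j' (z j')) * (((NMask mask x : ℝ))⁻¹ * reachP D G x0 j (Function.update x i (z i)))
        = ((NMask mask x : ℝ))⁻¹ *
            ((∏ j', D x j' (z j')) * reachP D G x0 j (Function.update x i (z i))) := by
    intro z; ring
  rw [Finset.sum_congr rfl fun z _ => h2 z, ← Finset.mul_sum]
  congr 1
  exact marginal (D x) (hD1 x) i (fun y => reachP D G x0 j (Function.update x i y))

lemma stepKernel_nonneg (hD0 : ∀ x i y, 0 ≤ D x i y)
    (hG : ∀ z x i, G z x i = if x i = mask then ((NMask mask x : ℝ))⁻¹ else 0)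
    (x w : Fin L → V) : 0 ≤ stepKernel D G x w := by
  refine Finset.sum_nonneg fun z _ => mul_nonneg (Finset.prod_nonneg fun j _ => hD0 x j (z j)) ?_
  refine Finset.sum_nonneg fun i _ => ?_
  rw [hG]
  split_ifs
  · positivity
  · exact le_refl 0

lemma reachP_nonneg (hD0 : ∀ x i y, 0 ≤ D x i y)
    (hG : ∀ z x i, G z x i = if x i = mask then ((NMask mask x : ℝ))⁻¹ else 0) :
    ∀ (j : ℕ) (x : Fin L → V), 0 ≤ reachP D G x0 j x := by
  intro j
  induction j with
  | zero => intro x; simp only [reachP]; split_ifs <;> norm_num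
  | succ j IH =>
    intro x
    refine Finset.sum_nonneg fun w _ => mul_nonneg (stepKernel_nonneg hD0 hG x w) (IH w)

variable (hD0 : ∀ x i y, 0 ≤ D x i y) (hD1 : ∀ x i, ∑ y, D x i y = 1)
  (hG : ∀ z x i, G z x i = if x i = mask then ((NMask mask x : ℝ))⁻¹ else 0)
  (hx0 : ∀ i, x0 i ≠ mask)
  (hDpos : ∀ x : Fin L → V, (∀ i', x i' = x0 i' ∨ x i' = mask) →
      ∀ i, x i = mask → 0 < D x i (x0 i))
include hD0 hD1 hG hx0 hDpos

lemma reachP_pos : ∀ j, ∀ x ∈ XSet mask x0 j, 0 < reachP D G x0 j x := by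
  intro j
  induction j with
  | zero =>
    intro x hx
    rw [mem_XSet_zero hx0] at hx
    simp [reachP, hx]
  | succ j IH =>
    intro x hx
    obtain ⟨hsh, hn⟩ := mem_XSet.1 hx
    rw [reachP_succ hD1 hG]
    have hfil : (Finset.univ.filter (fun i : Fin L => x i = mask)).Nonempty := by
      rw [← Finset.card_pos]
      show 0 < NMask mask x
      omega
    obtain ⟨i0, hi0⟩ := hfil
    have hi0m : x i0 = mask := (Finset.mem_filter.1 hi0).2
    refine Finset.sum_pos' (fun i hi => ?_) ⟨i0, hi0, ?_⟩
    · refine mul_nonneg (by positivity) (Finset.sum_nonneg fun y _ =>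
        mul_nonneg (hD0 x i y) (reachP_nonneg hD0 hG j _))
    · have hNM : (0 : ℝ) < ((NMask mask x : ℝ))⁻¹ := by
        rw [hn]; positivity
      refine mul_pos hNM ?_
      have hterm : 0 < D x i0 (x0 i0) * reachP D G x0 j (Function.update x i0 (x0 i0)) :=
        mul_pos (hDpos x hsh i0 hi0m) (IH _ (update_unmask_mem hx0 hx hi0m))
      refine lt_of_lt_of_le hterm ?_
      exact Finset.single_le_sum (f := fun y => D x i0 y * reachP D G x0 j (Function.update x i0 y))
        (fun y _ => mul_nonneg (hD0 x i0 y) (reachP_nonneg hD0 hG j _)) (Finset.mem_univ (x0 i0))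

lemma hLB_le_log : ∀ j, ∀ x ∈ XSet mask x0 j,
    hLB D mask x0 j x ≤ Real.log (reachP D G x0 j x) := by
  intro j
  induction j with
  | zero =>
    intro x hx
    rw [mem_XSet_zero hx0] at hx
    simp [reachP, hLB, hx]
  | succ j IH =>
    intro x hx
    obtain ⟨hsh, hn⟩ := mem_XSet.1 hx
    set s := Finset.univ.filter (fun i : Fin L => x i = mask) with hs
    have hcard : s.card = j + 1 := hn
    have hsne : s.Nonempty := by rw [← Finset.card_pos, hcard]; omega
    set t : Fin L → ℝ := fun i =>
      D x i (x0 i) * reachP D G x0 j (Function.update x i (x0 i)) with ht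
    have htpos : ∀ i ∈ s, 0 < t i := by
      intro i hi
      have him : x i = mask := (Finset.mem_filter.1 hi).2
      exact mul_pos (hDpos x hsh i him)
        (reachP_pos hD0 hD1 hG hx0 hDpos j _ (update_unmask_mem hx0 hx him))
    have hNM : ((NMask mask x : ℝ)) = (j : ℝ) + 1 := by rw [hn]; push_cast; ring
    have h2 : (∑ i ∈ s, ((j : ℝ) + 1)⁻¹ * t i) ≤ reachP D G x0 (j + 1) x := by
      rw [reachP_succ hD1 hG, ← hs]
      refine Finset.sum_le_sum fun i hi => ?_
      rw [hNM]
      refine mul_le_mul_of_nonneg_left ?_ (by positivity)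
      exact Finset.single_le_sum
        (f := fun y => D x i y * reachP D G x0 j (Function.update x i y))
        (fun y _ => mul_nonneg (hD0 x i y) (reachP_nonneg hD0 hG j _)) (Finset.mem_univ (x0 i))
    have hsumpos : 0 < ∑ i ∈ s, ((j : ℝ) + 1)⁻¹ * t i := by
      refine Finset.sum_pos (fun i hi => mul_pos (by positivity) (htpos i hi)) hsne
    have jensen : (∑ i ∈ s, ((j : ℝ) + 1)⁻¹ * Real.log (t i))
        ≤ Real.log (∑ i ∈ s, ((j : ℝ) + 1)⁻¹ * t i) := by
      have := (strictConcaveOn_log_Ioi.concaveOn).le_map_sum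
        (t := s) (w := fun _ => ((j : ℝ) + 1)⁻¹) (p := t)
        (fun i _ => by positivity)
        (by rw [Finset.sum_const, hcard, nsmul_eq_mul]
            push_cast
            field_simp)
        (fun i hi => Set.mem_Ioi.2 (htpos i hi))
      simpa [smul_eq_mul] using this
    have hchain : hLB D mask x0 (j + 1) x ≤ ∑ i ∈ s, ((j : ℝ) + 1)⁻¹ * Real.log (t i) := by
      show ((j : ℝ) + 1)⁻¹ * (∑ i ∈ s,
          (Real.log (D x i (x0 i)) + hLB D mask x0 j (Function.update x i (x0 i)))) ≤ _
      rw [Finset.mul_sum]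
      refine Finset.sum_le_sum fun i hi => ?_
      have him : x i = mask := (Finset.mem_filter.1 hi).2
      have hlogt : Real.log (t i) = Real.log (D x i (x0 i))
          + Real.log (reachP D G x0 j (Function.update x i (x0 i))) := by
        rw [ht]
        exact Real.log_mul (ne_of_gt (hDpos x hsh i him))
          (ne_of_gt (reachP_pos hD0 hD1 hG hx0 hDpos j _ (update_unmask_mem hx0 hx him)))
      rw [hlogt]
      refine mul_le_mul_of_nonneg_left ?_ (by positivity)
      exact add_le_add (le_refl _) (IH _ (update_unmask_mem hx0 hx him))
    calc hLB D mask x0 (j + 1) x ≤ ∑ i ∈ s, ((j : ℝ) + 1)⁻¹ * Real.log (t i) := hchain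
      _ ≤ Real.log (∑ i ∈ s, ((j : ℝ) + 1)⁻¹ * t i) := jensen
      _ ≤ Real.log (reachP D G x0 (j + 1) x) := Real.log_le_log hsumpos h2

end

/-- the `j`-th term of the vanilla ELBO. -/
noncomputable def gterm {V : Type*} [Fintype V] [DecidableEq V] {L : ℕ}
    (D : (Fin L → V) → Fin L → V → ℝ) (mask : V) (x0 : Fin L → V) (j : ℕ) : ℝ :=
  ((XSet mask x0 j).card : ℝ)⁻¹ *
    ∑ x ∈ XSet mask x0 j,
      ∑ i ∈ Finset.univ.filter (fun i : Fin L => x i = mask),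
        ((j : ℝ))⁻¹ * Real.log (D x i (x0 i))

section
variable {V : Type*} [Fintype V] [DecidableEq V] {L : ℕ} {mask : V}
  {D : (Fin L → V) → Fin L → V → ℝ}
  {x0 : Fin L → V}

lemma hLB_avg (hx0 : ∀ i, x0 i ≠ mask) :
    ∀ j, j ≤ L → (∑ x ∈ XSet mask x0 j, hLB D mask x0 j x)
      = ((XSet mask x0 j).card : ℝ) * ∑ j' ∈ Finset.range j, gterm D mask x0 (j' + 1) := by
  intro j
  induction j with
  | zero => intro _; simp [hLB]
  | succ j IH =>
    intro hj
    have hIH := IH (by omega)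
    obtain ⟨xx, hxx⟩ := XSet_nonempty (hx0 := hx0) (j := j + 1) hj
    have hc1 : ((XSet mask x0 (j + 1)).card : ℝ) ≠ 0 :=
      Nat.cast_ne_zero.2 (Finset.card_ne_zero_of_mem hxx)
    have hre := reindex (hx0 := hx0) j (hLB D mask x0 j)
    have hcI := card_identity (hx0 := hx0) j
    set A : ℝ := ∑ x ∈ XSet mask x0 (j + 1),
      ∑ i ∈ Finset.univ.filter (fun i : Fin L => x i = mask),
        Real.log (D x i (x0 i)) with hA
    set Rj : ℝ := ∑ j' ∈ Finset.range j, gterm D mask x0 (j' + 1) with hRj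
    have lhs_eq : (∑ x ∈ XSet mask x0 (j + 1), hLB D mask x0 (j + 1) x)
        = ((j : ℝ) + 1)⁻¹ * (A + ((L - j : ℕ) : ℝ) * (((XSet mask x0 j).card : ℝ) * Rj)) := by
      simp only [hLB]
      rw [← Finset.mul_sum]
      congr 1
      rw [Finset.sum_congr rfl fun x _ => Finset.sum_add_distrib, Finset.sum_add_distrib]
      congr 1
      rw [hre, ← Finset.mul_sum, hIH]
    have gt_eq : gterm D mask x0 (j + 1)
        = ((XSet mask x0 (j + 1)).card : ℝ)⁻¹ * (((j : ℝ) + 1)⁻¹ * A) := by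
      unfold gterm
      congr 1
      rw [Finset.mul_sum]
      refine Finset.sum_congr rfl fun x _ => ?_
      rw [Finset.mul_sum]
      refine Finset.sum_congr rfl fun i _ => ?_
      push_cast
      ring
    rw [lhs_eq, Finset.sum_range_succ, ← hRj, gt_eq]
    have hcast : ((j : ℝ)) + 1 = ((j + 1 : ℕ) : ℝ) := by push_cast; ring
    field_simp
    linear_combination (-Rj) * hcI

end

/-- **The uniform planner recovers the vanilla DLM ELBO.**  If the planner is uniform
over the masked positions, then (1) `F(x, x₀^i, i) = 1/N_M(x)` for every masked `i`;
(2) the correction term `𝓔₂(x₀)` of the planner-aware ELBO vanishes; (3) the reference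
chain law `r^G_k(·; x₀)` is the uniform distribution on `𝓧_{L-k}(x₀)`; and (4) the
planner-aware lower bound for a mask-free `x₀` equals the vanilla masked-diffusion ELBO. -/
theorem uniform_planner_recovers_vanilla_elbo
    {V : Type*} [Fintype V] [DecidableEq V] {L : ℕ}
    (mask : V)
    (D : (Fin L → V) → Fin L → V → ℝ)
    (G : (Fin L → V) → (Fin L → V) → Fin L → ℝ)
    (hD0 : ∀ x i y, 0 ≤ D x i y) (hD1 : ∀ x i, ∑ y, D x i y = 1)
    (hG : ∀ z x i, G z x i = if x i = mask then ((NMask mask x : ℝ))⁻¹ else 0)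
    (x0 : Fin L → V) (hx0 : ∀ i, x0 i ≠ mask)
    (hDpos : ∀ x : Fin L → V, (∀ i', x i' = x0 i' ∨ x i' = mask) →
      ∀ i, x i = mask → 0 < D x i (x0 i)) :
    (∀ (x : Fin L → V) (i : Fin L), x i = mask →
        Fplan D G x (x0 i) i = ((NMask mask x : ℝ))⁻¹) ∧
    (-((L : ℝ) * ((L : ℝ)⁻¹ * ∑ k ∈ Finset.range L, ∑ x : Fin L → V,
        refDist G mask x0 k x *
          ∑ i ∈ Finset.univ.filter (fun i : Fin L => x i = mask),
            G x0 x i * Real.log (G x0 x i / Fplan D G x (x0 i) i))) = 0) ∧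
    (∀ k, k ≤ L → ∀ x : Fin L → V,
        refDist G mask x0 k x =
          if x ∈ XSet mask x0 (L - k) then ((XSet mask x0 (L - k)).card : ℝ)⁻¹ else 0) ∧
    (Real.log (sampleDist D G mask L x0)
      ≥ (L : ℝ) * ((L : ℝ)⁻¹ * ∑ k ∈ Finset.range L,
          ((XSet mask x0 (L - k)).card : ℝ)⁻¹ *
            ∑ x ∈ XSet mask x0 (L - k),
              ∑ i ∈ Finset.univ.filter (fun i : Fin L => x i = mask),
                ((L - k : ℕ) : ℝ)⁻¹ * Real.log (D x i (x0 i)))) := by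
  have part1 : ∀ (x : Fin L → V) (i : Fin L), x i = mask →
      Fplan D G x (x0 i) i = ((NMask mask x : ℝ))⁻¹ := by
    intro x i hi
    rw [Fplan_eq hD1 hG, if_pos hi]
  refine ⟨part1, ?_, refDist_uniform hG hx0, ?_⟩
  · -- part 2 : the correction term vanishes
    have hz : ∀ x : Fin L → V,
        (∑ i ∈ Finset.univ.filter (fun i : Fin L => x i = mask),
          G x0 x i * Real.log (G x0 x i / Fplan D G x (x0 i) i)) = 0 := by
      intro x
      refine Finset.sum_eq_zero fun i hi => ?_
      have him : x i = mask := (Finset.mem_filter.1 hi).2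
      have hNM : NMask mask x ≠ 0 := by
        have hpos := Finset.card_pos.2 ⟨i, hi⟩
        simp only [NMask]
        omega
      rw [part1 x i him, hG, if_pos him,
        div_self (inv_ne_zero (Nat.cast_ne_zero.2 hNM)), Real.log_one, mul_zero]
    simp only [hz, mul_zero, Finset.sum_const_zero, neg_zero]
  · -- part 4 : the vanilla ELBO
    rcases eq_or_ne L 0 with hL | hL
    · subst hL
      have hx : x0 = fun _ => mask := funext fun i => i.elim0
      simp [sampleDist, hx]
    · have hconst : (fun _ : Fin L => mask) ∈ XSet mask x0 L := by
        rw [XSet_L (hx0 := hx0)]; exact Finset.mem_singleton_self _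
      have h1 : hLB D mask x0 L (fun _ => mask) ≤ Real.log (sampleDist D G mask L x0) := by
        rw [sdist_eq_reach]
        exact hLB_le_log hD0 hD1 hG hx0 hDpos L _ hconst
      have h2 := hLB_avg (D := D) (hx0 := hx0) L le_rfl
      rw [XSet_L (hx0 := hx0)] at h2
      simp only [Finset.sum_singleton, Finset.card_singleton, Nat.cast_one, one_mul] at h2
      have h3 : (∑ k ∈ Finset.range L, gterm D mask x0 (L - k))
          = ∑ j' ∈ Finset.range L, gterm D mask x0 (j' + 1) := by
        rw [← Finset.sum_range_reflect (fun j => gterm D mask x0 (j + 1)) L]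
        refine Finset.sum_congr rfl fun k hk => ?_
        have hkL : k < L := Finset.mem_range.1 hk
        congr 1
        omega
      rw [ge_iff_le, ← mul_assoc, mul_inv_cancel₀ (Nat.cast_ne_zero.2 hL), one_mul]
      show (∑ k ∈ Finset.range L, gterm D mask x0 (L - k))
          ≤ Real.log (sampleDist D G mask L x0)
      rw [h3, ← h2]
      exact h1
end

section
/- ELBO for the soft greedy (softmax) planner: fix τ > 0 and define the planner G^τ by Cat(j; G^τ(z, x)) = exp( (1/τ) log Cat(z^j; D^j(x)) ) / C^τ(z, x) for masked j, where C^τ(z, x) = Σ_{i : x^i = m} exp( (1/τ) log Cat(z^i; D^i(x)) ). Let p^τ be the distribution of planner-guided sampling with G^τ, and let r^τ_k(·; x_0) be the step-k law of the reference chain driven by G^τ(x_0, ·). Then for any x_0 ∈ V^L with no masks, log p^τ(x_0) ≥ 𝓔_1(x_0) + 𝓔_2(x_0), where 𝓔_1(x_0) = L · E_{k ~ Unif({0,...,L-1})} E_{x_k ~ r^τ_k(·;x_0)}[ Σ_{i : x_k^i = m} Cat(i; G^τ(x_0, x_k)) · log Cat( x_0^i; D^i(x_k) ) ] and 𝓔_2(x_0)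 = L · E_{k ~ Unif({0,...,L-1})} E_{x_k ~ r^τ_k(·;x_0)} E_{z ~ D(x_k)}[ Σ_{i : x_k^i = m} Cat(i; G^τ(x_0, x_k)) · log( C^τ(x_0, x_k) / C^τ(z^{-i,x_0^i}, x_k) ) ]. -/
open Finset

/-- The normalizing constant of the soft greedy planner:
`C^τ(z, x) = Σ_{i : x^i = m} exp((1/τ) log Cat(z^i; D^i(x)))`. -/
noncomputable def Ctau {V : Type*} [Fintype V] [DecidableEq V] {L : ℕ}
    (τ : ℝ) (D : (Fin L → V) → Fin L → V → ℝ) (mask : V)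
    (z x : Fin L → V) : ℝ :=
  ∑ i ∈ Finset.univ.filter (fun i : Fin L => x i = mask),
    Real.exp ((1 / τ) * Real.log (D x i (z i)))

/-- The soft greedy (softmax) planner:
`Cat(j; G^τ(z, x)) = exp((1/τ) log Cat(z^j; D^j(x))) / C^τ(z, x)` for masked `j`. -/
noncomputable def Gtau {V : Type*} [Fintype V] [DecidableEq V] {L : ℕ}
    (τ : ℝ) (D : (Fin L → V) → Fin L → V → ℝ) (mask : V)
    (z x : Fin L → V) (j : Fin L) : ℝ :=
  if x j = mask then
    Real.exp ((1 / τ) * Real.log (D x j (z j))) / Ctau τ D mask z x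
  else 0

/-- Log-sum inequality. -/
lemma logsum_aux {ι : Type*} (s : Finset ι) (a b : ι → ℝ)
    (ha : ∀ x ∈ s, 0 ≤ a x) (hb : ∀ x ∈ s, 0 ≤ b x)
    (hab : ∀ x ∈ s, 0 < b x → 0 < a x) :
    ∑ x ∈ s, b x * Real.log (a x / b x)
      ≤ (∑ x ∈ s, b x) * Real.log ((∑ x ∈ s, a x) / (∑ x ∈ s, b x)) := by
  rcases eq_or_lt_of_le (Finset.sum_nonneg hb) with h0 | hbpos
  · have : ∀ x ∈ s, b x = 0 := by
      intro x hx
      have := (Finset.sum_eq_zero_iff_of_nonneg hb).1 h0.symm x hx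
      exact this
    rw [← h0]
    rw [Finset.sum_eq_zero (fun x hx => by rw [this x hx, zero_mul]), zero_mul]
  · have hapos : 0 < ∑ x ∈ s, a x := by
      obtain ⟨x, hx, hbx⟩ : ∃ x ∈ s, 0 < b x := by
        by_contra h
        push_neg at h
        have : ∑ x ∈ s, b x ≤ 0 := Finset.sum_nonpos (fun x hx => h x hx)
        linarith
      exact Finset.sum_pos' ha ⟨x, hx, hab x hx hbx⟩
    have key : ∀ x ∈ s,
        b x * Real.log (a x / b x) - b x * Real.log ((∑ y ∈ s, a y) / (∑ y ∈ s, b y))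
          ≤ a x * (∑ y ∈ s, b y) / (∑ y ∈ s, a y) - b x := by
      intro x hx
      rcases eq_or_lt_of_le (hb x hx) with hb0 | hbx
      · rw [← hb0]
        simp only [zero_mul, sub_zero, zero_sub, neg_nonpos] at *
        have := ha x hx
        positivity
      · have hax := hab x hx hbx
        have h1 : Real.log (a x / b x) - Real.log ((∑ y ∈ s, a y) / (∑ y ∈ s, b y))
            = Real.log ((a x * (∑ y ∈ s, b y)) / (b x * (∑ y ∈ s, a y))) := by
          rw [Real.log_div hax.ne' hbx.ne', Real.log_div hapos.ne' hbpos.ne',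
            Real.log_div (by positivity) (by positivity),
            Real.log_mul hax.ne' hbpos.ne', Real.log_mul hbx.ne' hapos.ne']
          ring
        have h2 : Real.log ((a x * (∑ y ∈ s, b y)) / (b x * (∑ y ∈ s, a y)))
            ≤ (a x * (∑ y ∈ s, b y)) / (b x * (∑ y ∈ s, a y)) - 1 :=
          Real.log_le_sub_one_of_pos (by positivity)
        have h3 := mul_le_mul_of_nonneg_left h2 hbx.le
        have h4 : b x * ((a x * (∑ y ∈ s, b y)) / (b x * (∑ y ∈ s, a y)) - 1)
            = a x * (∑ y ∈ s, b y) / (∑ y ∈ s, a y) - b x := by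
          field_simp
        calc b x * Real.log (a x / b x) - b x * Real.log ((∑ y ∈ s, a y) / (∑ y ∈ s, b y))
              = b x * Real.log ((a x * (∑ y ∈ s, b y)) / (b x * (∑ y ∈ s, a y))) := by
                rw [← mul_sub, h1]
          _ ≤ b x * ((a x * (∑ y ∈ s, b y)) / (b x * (∑ y ∈ s, a y)) - 1) := h3
          _ = a x * (∑ y ∈ s, b y) / (∑ y ∈ s, a y) - b x := h4
    have := Finset.sum_le_sum key
    rw [Finset.sum_sub_distrib, Finset.sum_sub_distrib, ← Finset.sum_mul] at this
    have heq : ∑ x ∈ s, a x * (∑ y ∈ s, b y) / (∑ y ∈ s, a y)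
        = ∑ y ∈ s, b y := by
      rw [← Finset.sum_div, ← Finset.sum_mul]
      field_simp
    rw [heq] at this
    linarith

set_option linter.unusedSectionVars false
section Aux
variable {V : Type*} [Fintype V] [DecidableEq V] {L : ℕ}
variable (τ : ℝ) (D : (Fin L → V) → Fin L → V → ℝ) (mask : V)

lemma Ctau_nonneg (z x : Fin L → V) : 0 ≤ Ctau τ D mask z x :=
  Finset.sum_nonneg fun _ _ => (Real.exp_pos _).le

lemma Ctau_pos (z x : Fin L → V) (h : ∃ i, x i = mask) : 0 < Ctau τ D mask z x := by
  obtain ⟨i, hi⟩ := h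
  exact Finset.sum_pos' (fun _ _ => (Real.exp_pos _).le)
    ⟨i, by simp [hi], Real.exp_pos _⟩

lemma Gtau_nonneg (z x : Fin L → V) (j : Fin L) : 0 ≤ Gtau τ D mask z x j := by
  unfold Gtau
  split
  · exact div_nonneg (Real.exp_pos _).le (Ctau_nonneg τ D mask z x)
  · exact le_rfl

lemma Gtau_pos (z x : Fin L → V) (j : Fin L) (hj : x j = mask) :
    0 < Gtau τ D mask z x j := by
  unfold Gtau
  rw [if_pos hj]
  exact div_pos (Real.exp_pos _) (Ctau_pos τ D mask z x ⟨j, hj⟩)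

lemma Gtau_sum_one (z x : Fin L → V) (h : ∃ i, x i = mask) :
    ∑ i ∈ Finset.univ.filter (fun i : Fin L => x i = mask), Gtau τ D mask z x i = 1 := by
  have hC := Ctau_pos τ D mask z x h
  have : ∀ i ∈ Finset.univ.filter (fun i : Fin L => x i = mask),
      Gtau τ D mask z x i = Real.exp ((1 / τ) * Real.log (D x i (z i))) / Ctau τ D mask z x := by
    intro i hi
    rw [Finset.mem_filter] at hi
    rw [Gtau, if_pos hi.2]
  rw [Finset.sum_congr rfl this, ← Finset.sum_div]
  rw [show (∑ i ∈ Finset.univ.filter (fun i : Fin L => x i = mask),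
      Real.exp ((1 / τ) * Real.log (D x i (z i)))) = Ctau τ D mask z x from rfl]
  exact div_self hC.ne'

/-- summing a function of `w` over fibers of `i ↦ update x i (x0 i)`. -/
lemma fiber_sum (x0 x : Fin L → V) (f : (Fin L → V) → Fin L → ℝ) :
    ∑ w : Fin L → V, ∑ i ∈ Finset.univ.filter
        (fun i : Fin L => x i = mask ∧ Function.update x i (x0 i) = w), f w i
      = ∑ i ∈ Finset.univ.filter (fun i : Fin L => x i = mask),
          f (Function.update x i (x0 i)) i := by
  simp only [Finset.sum_filter]
  rw [Finset.sum_comm]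
  refine Finset.sum_congr rfl fun i _ => ?_
  by_cases hm : x i = mask
  · simp only [hm, true_and, if_pos]
    rw [Finset.sum_ite_eq Finset.univ (Function.update x i (x0 i)) (fun w => f w i)]
    simp
  · simp [hm]

lemma filter_update_singleton (x0 x : Fin L → V) (hx0 : ∀ i, x0 i ≠ mask)
    (i : Fin L) (hi : x i = mask) :
    Finset.univ.filter (fun i' : Fin L => x i' = mask ∧
        Function.update x i' (x0 i') = Function.update x i (x0 i)) = {i} := by
  ext i'
  simp only [Finset.mem_filter, Finset.mem_univ, true_and, Finset.mem_singleton]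
  constructor
  · rintro ⟨hm, heq⟩
    by_contra hne
    have := congrFun heq i
    rw [Function.update_of_ne (Ne.symm hne), Function.update_self] at this
    exact hx0 i (this ▸ hi)
  · rintro rfl
    exact ⟨hi, rfl⟩

variable (x0 : Fin L → V)

lemma refDist_nonneg : ∀ k w, 0 ≤ refDist (Gtau τ D mask) mask x0 k w := by
  intro k
  induction k with
  | zero => intro w; rw [refDist]; split <;> norm_num
  | succ k ih =>
    intro w
    rw [refDist]
    exact Finset.sum_nonneg fun x _ => mul_nonneg (ih x)
      (Finset.sum_nonneg fun i _ => Gtau_nonneg τ D mask x0 x i)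

lemma refDist_succ_ne {k : ℕ} {w : Fin L → V}
    (h : refDist (Gtau τ D mask) mask x0 (k+1) w ≠ 0) :
    ∃ x i, refDist (Gtau τ D mask) mask x0 k x ≠ 0 ∧ x i = mask ∧
      Function.update x i (x0 i) = w := by
  rw [refDist] at h
  obtain ⟨x, -, hx⟩ := Finset.exists_ne_zero_of_sum_ne_zero h
  rcases mul_ne_zero_iff.1 hx with ⟨h1, h2⟩
  obtain ⟨i, hi, -⟩ := Finset.exists_ne_zero_of_sum_ne_zero h2
  rw [Finset.mem_filter] at hi
  exact ⟨x, i, h1, hi.2.1, hi.2.2⟩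

lemma refDist_support (hx0 : ∀ i, x0 i ≠ mask) :
    ∀ k w, refDist (Gtau τ D mask) mask x0 k w ≠ 0 →
      (∀ i, w i = mask ∨ w i = x0 i) ∧
        (Finset.univ.filter fun i : Fin L => w i = mask).card = L - k := by
  intro k
  induction k with
  | zero =>
    intro w h
    rw [refDist] at h
    split at h
    · subst ‹w = fun _ => mask›
      refine ⟨fun i => Or.inl rfl, ?_⟩
      simp
    · exact absurd rfl h
  | succ k ih =>
    intro w h
    obtain ⟨x, i, hne, hm, hupd⟩ := refDist_succ_ne τ D mask x0 h
    obtain ⟨hor, hcard⟩ := ih x hne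
    subst hupd
    constructor
    · intro j
      by_cases hj : j = i
      · subst hj; right; simp
      · rw [Function.update_of_ne hj]; exact hor j
    · have hfil : (Finset.univ.filter fun j : Fin L =>
          Function.update x i (x0 i) j = mask)
          = (Finset.univ.filter fun j : Fin L => x j = mask).erase i := by
        ext j
        simp only [Finset.mem_filter, Finset.mem_univ, true_and, Finset.mem_erase]
        by_cases hj : j = i
        · subst hj
          simp only [Function.update_self]
          constructor
          · intro hc; exact absurd hc (hx0 j)
          · rintro ⟨hc, -⟩; exact absurd rfl hc
        · rw [Function.update_of_ne hj]
          exact ⟨fun hc => ⟨hj, hc⟩, fun hc => hc.2⟩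
      rw [hfil, Finset.card_erase_of_mem (by simp [hm]), hcard]
      omega

lemma refDist_sum_one (hx0 : ∀ i, x0 i ≠ mask) :
    ∀ k, k ≤ L → ∑ w : Fin L → V, refDist (Gtau τ D mask) mask x0 k w = 1 := by
  intro k
  induction k with
  | zero =>
    intro _
    simp only [refDist]
    rw [Finset.sum_ite_eq' Finset.univ (fun _ => mask) (fun _ => (1:ℝ))]
    simp
  | succ k ih =>
    intro hk
    simp only [refDist]
    rw [Finset.sum_comm]
    have : ∀ x : Fin L → V,
        (∑ w : Fin L → V, refDist (Gtau τ D mask) mask x0 k x *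
          ∑ i ∈ Finset.univ.filter
              (fun i : Fin L => x i = mask ∧ Function.update x i (x0 i) = w),
            Gtau τ D mask x0 x i)
        = refDist (Gtau τ D mask) mask x0 k x := by
      intro x
      rw [← Finset.mul_sum]
      by_cases hz : refDist (Gtau τ D mask) mask x0 k x = 0
      · rw [hz, zero_mul]
      · obtain ⟨-, hcard⟩ := refDist_support τ D mask x0 hx0 k x hz
        have hmex : ∃ i, x i = mask := by
          have hpos : 0 < (Finset.univ.filter fun i : Fin L => x i = mask).card := by
            omega
          obtain ⟨i, hi⟩ := Finset.card_pos.1 hpos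
          rw [Finset.mem_filter] at hi
          exact ⟨i, hi.2⟩
        rw [fiber_sum mask x0 x (fun _ i => Gtau τ D mask x0 x i),
          Gtau_sum_one τ D mask x0 x hmex, mul_one]
    rw [Finset.sum_congr rfl fun x _ => this x]
    exact ih (by omega)

lemma refDist_L (hx0 : ∀ i, x0 i ≠ mask) :
    refDist (Gtau τ D mask) mask x0 L x0 = 1 := by
  have hsum := refDist_sum_one τ D mask x0 hx0 L le_rfl
  have hz : ∀ w : Fin L → V, w ≠ x0 → refDist (Gtau τ D mask) mask x0 L w = 0 := by
    intro w hw
    by_contra hne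
    obtain ⟨hor, hcard⟩ := refDist_support τ D mask x0 hx0 L w hne
    apply hw
    funext i
    rcases hor i with h | h
    · exfalso
      have : i ∈ Finset.univ.filter fun i : Fin L => w i = mask := by simp [h]
      have := Finset.card_pos.2 ⟨i, this⟩
      omega
    · exact h
  rw [← hsum]
  exact (Finset.sum_eq_single_of_mem x0 (Finset.mem_univ x0)
    (fun w _ hw => hz w hw)).symm

lemma stepKernel_nonneg_s11 (hD : ∀ x i y, 0 ≤ D x i y) (x w : Fin L → V) :
    0 ≤ stepKernel D (Gtau τ D mask) x w :=
  Finset.sum_nonneg fun z _ => mul_nonneg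
    (Finset.prod_nonneg fun j _ => hD x j (z j))
    (Finset.sum_nonneg fun i _ => Gtau_nonneg τ D mask z x i)

lemma sampleDist_nonneg (hD : ∀ x i y, 0 ≤ D x i y) :
    ∀ k w, 0 ≤ sampleDist D (Gtau τ D mask) mask k w := by
  intro k
  induction k with
  | zero => intro w; rw [sampleDist]; split <;> norm_num
  | succ k ih =>
    intro w
    rw [sampleDist]
    exact Finset.sum_nonneg fun x _ => mul_nonneg (ih x)
      (stepKernel_nonneg_s11 τ D mask hD x w)

lemma stepKernel_pos (hDpos : ∀ x i y, 0 < D x i y) (x : Fin L → V) (i : Fin L)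
    (hi : x i = mask) :
    0 < stepKernel D (Gtau τ D mask) x (Function.update x i (x0 i)) := by
  rw [stepKernel]
  apply Finset.sum_pos'
  · intro z _
    exact mul_nonneg (Finset.prod_nonneg fun j _ => (hDpos x j (z j)).le)
      (Finset.sum_nonneg fun i' _ => Gtau_nonneg τ D mask z x i')
  · refine ⟨x0, Finset.mem_univ x0, mul_pos
      (Finset.prod_pos fun j _ => hDpos x j (x0 j)) ?_⟩
    have hmem : i ∈ Finset.univ.filter fun i' : Fin L =>
        Function.update x i' (x0 i') = Function.update x i (x0 i) := by simp
    calc (0:ℝ) < Gtau τ D mask x0 x i := Gtau_pos τ D mask x0 x i hi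
      _ ≤ _ := Finset.single_le_sum
          (fun i' _ => Gtau_nonneg τ D mask x0 x i') hmem

lemma sample_pos (hDpos : ∀ x i y, 0 < D x i y) :
    ∀ k x, refDist (Gtau τ D mask) mask x0 k x ≠ 0 →
      0 < sampleDist D (Gtau τ D mask) mask k x := by
  intro k
  induction k with
  | zero =>
    intro x hx
    rw [refDist] at hx
    rw [sampleDist]
    split at hx
    · subst ‹x = fun _ => mask›; norm_num
    · exact absurd rfl hx
  | succ k ih =>
    intro w hw
    obtain ⟨x, i, hne, hm, hupd⟩ := refDist_succ_ne τ D mask x0 hw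
    rw [sampleDist]
    apply Finset.sum_pos'
    · intro x' _
      exact mul_nonneg (sampleDist_nonneg τ D mask (fun a b c => (hDpos a b c).le) k x')
        (stepKernel_nonneg_s11 τ D mask (fun a b c => (hDpos a b c).le) x' w)
    · refine ⟨x, Finset.mem_univ x, mul_pos (ih x hne) ?_⟩
      rw [← hupd]
      exact stepKernel_pos τ D mask x0 hDpos x i hm

lemma prodD_sum_one (hD1 : ∀ x i, ∑ y, D x i y = 1) (x : Fin L → V) :
    ∑ z : Fin L → V, ∏ j, D x j (z j) = 1 := by
  rw [← Fintype.piFinset_univ, ← Finset.prod_univ_sum (fun _ => Finset.univ)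
    (fun j y => D x j y)]
  simp [hD1 x]

lemma sum_update_indicator (i : Fin L) (a y : V) (h : (Fin L → V) → ℝ) :
    ∑ z : Fin L → V, (if z i = y then h (Function.update z i a) else 0)
      = ∑ z : Fin L → V, (if z i = a then h z else 0) := by
  rw [← Finset.sum_filter, ← Finset.sum_filter]
  refine Finset.sum_nbij' (fun z => Function.update z i a)
    (fun z => Function.update z i y) ?_ ?_ ?_ ?_ ?_
  · intro z hz; simp
  · intro z hz; simp
  · intro z hz
    rw [Finset.mem_filter] at hz
    show Function.update (Function.update z i a) i y = z
    rw [Function.update_idem, ← hz.2, Function.update_eq_self]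
  · intro z hz
    rw [Finset.mem_filter] at hz
    show Function.update (Function.update z i y) i a = z
    rw [Function.update_idem, ← hz.2, Function.update_eq_self]
  · intro z hz; rfl

lemma marg_split (i : Fin L) (F : (Fin L → V) → ℝ) :
    ∑ z : Fin L → V, F z
      = ∑ y : V, ∑ z : Fin L → V, (if z i = y then F z else 0) := by
  rw [Finset.sum_comm]
  refine Finset.sum_congr rfl fun z _ => ?_
  rw [Finset.sum_ite_eq Finset.univ (z i) (fun _ => F z)]
  simp

lemma prod_update_split (hDpos : ∀ x i y, 0 < D x i y) (x z : Fin L → V)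
    (i : Fin L) (a : V) :
    D x i a * ∏ j, D x j (z j)
      = D x i (z i) * ∏ j, D x j (Function.update z i a j) := by
  have h1 : ∏ j, D x j (Function.update z i a j)
      = D x i a * ∏ j ∈ Finset.univ.erase i, D x j (z j) := by
    have : ∀ j, D x j (Function.update z i a j)
        = Function.update (fun j => D x j (z j)) i (D x i a) j := by
      intro j
      by_cases hj : j = i
      · subst hj; simp
      · rw [Function.update_of_ne hj, Function.update_of_ne hj]
    rw [Finset.prod_congr rfl fun j _ => this j,
      Finset.prod_update_of_mem (Finset.mem_univ i)]
    congr 1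
    rw [Finset.sdiff_singleton_eq_erase]
  have h2 : ∏ j, D x j (z j)
      = D x i (z i) * ∏ j ∈ Finset.univ.erase i, D x j (z j) :=
    (Finset.mul_prod_erase Finset.univ (fun j => D x j (z j)) (Finset.mem_univ i)).symm
  rw [h1, h2]
  ring

/-- Marginalization identity. -/
lemma marg_id (hDpos : ∀ x i y, 0 < D x i y) (hD1 : ∀ x i, ∑ y, D x i y = 1)
    (x : Fin L → V) (i : Fin L) (a : V) (F : (Fin L → V) → ℝ) :
    D x i a * ∑ z : Fin L → V, (∏ j, D x j (z j)) * F (Function.update z i a)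
      = ∑ z : Fin L → V, (∏ j, D x j (z j)) * (if z i = a then F z else 0) := by
  rw [Finset.mul_sum]
  rw [marg_split (i := i) (F := fun z => D x i a * ((∏ j, D x j (z j)) * F (Function.update z i a)))]
  have key : ∀ y : V,
      (∑ z : Fin L → V, if z i = y
          then D x i a * ((∏ j, D x j (z j)) * F (Function.update z i a)) else 0)
      = D x i y * ∑ z : Fin L → V, (if z i = a then (∏ j, D x j (z j)) * F z else 0) := by
    intro y
    rw [← sum_update_indicator (i := i) (a := a) (y := y)
      (h := fun z => (∏ j, D x j (z j)) * F z), Finset.mul_sum]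
    refine Finset.sum_congr rfl fun z _ => ?_
    by_cases hz : z i = y
    · rw [if_pos hz, if_pos hz]
      have := prod_update_split (D := D) hDpos x z i a
      rw [← hz] at *
      calc D x i a * ((∏ j, D x j (z j)) * F (Function.update z i a))
          = (D x i a * ∏ j, D x j (z j)) * F (Function.update z i a) := by ring
        _ = (D x i (z i) * ∏ j, D x j (Function.update z i a j)) * F (Function.update z i a) := by
            rw [this]
        _ = D x i (z i) * ((∏ j, D x j (Function.update z i a j)) * F (Function.update z i a)) := by
            ring
    · rw [if_neg hz, if_neg hz, mul_zero]
  rw [Finset.sum_congr rfl fun y _ => key y, ← Finset.sum_mul, hD1 x i, one_mul]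
  refine Finset.sum_congr rfl fun z _ => ?_
  by_cases hz : z i = a
  · rw [if_pos hz, if_pos hz]
  · rw [if_neg hz, if_neg hz, mul_zero]

lemma logT_bound (hτ : 0 < τ) (hDpos : ∀ x i y, 0 < D x i y)
    (hD1 : ∀ x i, ∑ y, D x i y = 1) (hx0 : ∀ i, x0 i ≠ mask)
    (x : Fin L → V) (i : Fin L) (hi : x i = mask) :
    Real.log (D x i (x0 i)) +
        ∑ z : Fin L → V, (∏ j, D x j (z j)) *
          Real.log (Ctau τ D mask x0 x / Ctau τ D mask (Function.update z i (x0 i)) x)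
      ≤ Real.log (stepKernel D (Gtau τ D mask) x (Function.update x i (x0 i)))
          - Real.log (Gtau τ D mask x0 x i) := by
  set c : (Fin L → V) → ℝ :=
    fun z => Gtau τ D mask (Function.update z i (x0 i)) x i with hcdef
  have hmex : ∃ j, x j = mask := ⟨i, hi⟩
  have hcpos : ∀ z, 0 < c z := fun z => Gtau_pos τ D mask _ x i hi
  have hc : ∀ z : Fin L → V, c z = Real.exp ((1 / τ) * Real.log (D x i (x0 i))) /
      Ctau τ D mask (Function.update z i (x0 i)) x := by
    intro z
    rw [hcdef]
    simp only [Gtau, if_pos hi, Function.update_self]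
  set E : ℝ := ∑ z : Fin L → V, (∏ j, D x j (z j)) * c z with hEdef
  have hprodpos : ∀ z : Fin L → V, 0 < ∏ j, D x j (z j) :=
    fun z => Finset.prod_pos fun j _ => hDpos x j (z j)
  have hEpos : 0 < E :=
    Finset.sum_pos' (fun z _ => mul_nonneg (hprodpos z).le (hcpos z).le)
      ⟨x0, Finset.mem_univ x0, mul_pos (hprodpos x0) (hcpos x0)⟩
  -- Step 1: stepKernel lower bound
  have hstep1 : D x i (x0 i) * E
      ≤ stepKernel D (Gtau τ D mask) x (Function.update x i (x0 i)) := by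
    have hmarg := marg_id (D := D) hDpos hD1 x i (x0 i)
      (fun z => Gtau τ D mask z x i)
    rw [hmarg]
    rw [stepKernel]
    refine Finset.sum_le_sum fun z _ => ?_
    refine mul_le_mul_of_nonneg_left ?_ (hprodpos z).le
    by_cases hz : z i = x0 i
    · rw [if_pos hz]
      refine Finset.single_le_sum (fun i' _ => Gtau_nonneg τ D mask z x i') ?_
      simp only [Finset.mem_filter, Finset.mem_univ, true_and]
      rw [hz]
    · rw [if_neg hz]
      exact Finset.sum_nonneg fun i' _ => Gtau_nonneg τ D mask z x i'
  have hsteppos : 0 < stepKernel D (Gtau τ D mask) x (Function.update x i (x0 i)) :=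
    lt_of_lt_of_le (mul_pos (hDpos x i (x0 i)) hEpos) hstep1
  have hlogstep : Real.log (D x i (x0 i)) + Real.log E
      ≤ Real.log (stepKernel D (Gtau τ D mask) x (Function.update x i (x0 i))) := by
    rw [← Real.log_mul (hDpos x i (x0 i)).ne' hEpos.ne']
    exact Real.log_le_log (mul_pos (hDpos x i (x0 i)) hEpos) hstep1
  -- Step 2: Jensen
  have hjensen : ∑ z : Fin L → V, (∏ j, D x j (z j)) * Real.log (c z) ≤ Real.log E := by
    have := logsum_aux Finset.univ (fun z : Fin L → V => (∏ j, D x j (z j)) * c z)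
      (fun z : Fin L → V => ∏ j, D x j (z j))
      (fun z _ => mul_nonneg (hprodpos z).le (hcpos z).le)
      (fun z _ => (hprodpos z).le)
      (fun z _ hb => mul_pos (hprodpos z) (hcpos z))
    rw [prodD_sum_one (D := D) hD1 x, one_mul, div_one] at this
    calc ∑ z : Fin L → V, (∏ j, D x j (z j)) * Real.log (c z)
        = ∑ z : Fin L → V, (∏ j, D x j (z j)) *
            Real.log ((∏ j, D x j (z j)) * c z / (∏ j, D x j (z j))) := by
          refine Finset.sum_congr rfl fun z _ => ?_
          rw [mul_comm ((∏ j, D x j (z j))) (c z), mul_div_assoc,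
            div_self (hprodpos z).ne', mul_one]
      _ ≤ Real.log E := this
  -- Step 3: log c z
  have hCpos : ∀ z : Fin L → V, 0 < Ctau τ D mask z x := fun z => Ctau_pos τ D mask z x hmex
  have hlogc : ∀ z : Fin L → V, Real.log (c z)
      = (1 / τ) * Real.log (D x i (x0 i))
          - Real.log (Ctau τ D mask (Function.update z i (x0 i)) x) := by
    intro z
    rw [hc z, Real.log_div (Real.exp_ne_zero _) (hCpos _).ne', Real.log_exp]
  have hlogG : Real.log (Gtau τ D mask x0 x i)
      = (1 / τ) * Real.log (D x i (x0 i)) - Real.log (Ctau τ D mask x0 x) := by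
    rw [Gtau, if_pos hi, Real.log_div (Real.exp_ne_zero _) (hCpos x0).ne', Real.log_exp]
  have hsum1 : ∑ z : Fin L → V, (∏ j, D x j (z j)) * Real.log (c z)
      = (1 / τ) * Real.log (D x i (x0 i))
          - ∑ z : Fin L → V, (∏ j, D x j (z j)) *
              Real.log (Ctau τ D mask (Function.update z i (x0 i)) x) := by
    calc ∑ z : Fin L → V, (∏ j, D x j (z j)) * Real.log (c z)
        = ∑ z : Fin L → V, ((∏ j, D x j (z j)) * ((1 / τ) * Real.log (D x i (x0 i)))
            - (∏ j, D x j (z j)) *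
              Real.log (Ctau τ D mask (Function.update z i (x0 i)) x)) := by
          refine Finset.sum_congr rfl fun z _ => ?_
          rw [hlogc z, mul_sub]
      _ = _ := by
          rw [Finset.sum_sub_distrib, ← Finset.sum_mul, prodD_sum_one (D := D) hD1 x, one_mul]
  have hsum2 : ∑ z : Fin L → V, (∏ j, D x j (z j)) *
        Real.log (Ctau τ D mask x0 x / Ctau τ D mask (Function.update z i (x0 i)) x)
      = Real.log (Ctau τ D mask x0 x)
          - ∑ z : Fin L → V, (∏ j, D x j (z j)) *
              Real.log (Ctau τ D mask (Function.update z i (x0 i)) x) := by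
    calc ∑ z : Fin L → V, (∏ j, D x j (z j)) *
          Real.log (Ctau τ D mask x0 x / Ctau τ D mask (Function.update z i (x0 i)) x)
        = ∑ z : Fin L → V, ((∏ j, D x j (z j)) * Real.log (Ctau τ D mask x0 x)
            - (∏ j, D x j (z j)) *
              Real.log (Ctau τ D mask (Function.update z i (x0 i)) x)) := by
          refine Finset.sum_congr rfl fun z _ => ?_
          rw [Real.log_div (hCpos x0).ne' (hCpos _).ne', mul_sub]
      _ = _ := by
          rw [Finset.sum_sub_distrib, ← Finset.sum_mul, prodD_sum_one (D := D) hD1 x, one_mul]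
  rw [hsum1] at hjensen
  rw [hsum2, hlogG]
  linarith

lemma fiberQ (x : Fin L → V) (f : (Fin L → V) → ℝ) :
    ∑ w : Fin L → V,
        (∑ i ∈ Finset.univ.filter
            (fun i : Fin L => x i = mask ∧ Function.update x i (x0 i) = w),
          Gtau τ D mask x0 x i) * f w
      = ∑ i ∈ Finset.univ.filter (fun i : Fin L => x i = mask),
          Gtau τ D mask x0 x i * f (Function.update x i (x0 i)) := by
  have := fiber_sum mask x0 x (fun w i => Gtau τ D mask x0 x i * f w)
  rw [← this]
  exact Finset.sum_congr rfl fun w _ => Finset.sum_mul _ _ _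

lemma main_step (hDpos : ∀ x i y, 0 < D x i y) (hD1 : ∀ x i, ∑ y, D x i y = 1)
    (hx0 : ∀ i, x0 i ≠ mask) (k : ℕ) (hk : k < L) :
    (∑ x : Fin L → V, refDist (Gtau τ D mask) mask x0 k x *
        Real.log (sampleDist D (Gtau τ D mask) mask k x /
          refDist (Gtau τ D mask) mask x0 k x))
      + ∑ x : Fin L → V, refDist (Gtau τ D mask) mask x0 k x *
          ∑ i ∈ Finset.univ.filter (fun i : Fin L => x i = mask),
            Gtau τ D mask x0 x i *
              Real.log (stepKernel D (Gtau τ D mask) x (Function.update x i (x0 i)) /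
                Gtau τ D mask x0 x i)
    ≤ ∑ w : Fin L → V, refDist (Gtau τ D mask) mask x0 (k+1) w *
        Real.log (sampleDist D (Gtau τ D mask) mask (k+1) w /
          refDist (Gtau τ D mask) mask x0 (k+1) w) := by
  set G := Gtau τ D mask with hG
  set q := refDist (Gtau τ D mask) mask x0 with hq
  set p := sampleDist D (Gtau τ D mask) mask with hp
  set T := stepKernel D (Gtau τ D mask) with hT
  set Q : (Fin L → V) → (Fin L → V) → ℝ := fun x w =>
    ∑ i ∈ Finset.univ.filter
        (fun i : Fin L => x i = mask ∧ Function.update x i (x0 i) = w),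
      G x0 x i with hQ
  have hqnonneg : ∀ j x, 0 ≤ q j x := fun j x => refDist_nonneg τ D mask x0 j x
  have hQnonneg : ∀ x w, 0 ≤ Q x w :=
    fun x w => Finset.sum_nonneg fun i _ => Gtau_nonneg τ D mask x0 x i
  have hTpos : ∀ x w, 0 < Q x w → 0 < T x w := by
    intro x w hQpos
    obtain ⟨i, hi, -⟩ := Finset.exists_ne_zero_of_sum_ne_zero hQpos.ne'
    rw [Finset.mem_filter] at hi
    rw [← hi.2.2]
    exact stepKernel_pos τ D mask x0 hDpos x i hi.2.1
  have hTnonneg : ∀ x w, 0 ≤ T x w :=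
    fun x w => stepKernel_nonneg_s11 τ D mask (fun a b c => (hDpos a b c).le) x w
  have hpnonneg : ∀ j x, 0 ≤ p j x :=
    fun j x => sampleDist_nonneg τ D mask (fun a b c => (hDpos a b c).le) j x
  have hppos : ∀ x, q k x ≠ 0 → 0 < p k x := fun x h => sample_pos τ D mask x0 hDpos k x h
  -- Step A : per-w log-sum inequality
  have hA : ∀ w : Fin L → V,
      ∑ x : Fin L → V, (q k x * Q x w) * Real.log ((p k x * T x w) / (q k x * Q x w))
        ≤ q (k+1) w * Real.log (p (k+1) w / q (k+1) w) := by
    intro w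
    have hqk1 : q (k+1) w = ∑ x : Fin L → V, q k x * Q x w := by
      rw [hq]; rw [refDist]
    have hpk1 : p (k+1) w = ∑ x : Fin L → V, p k x * T x w := by
      rw [hp]; rw [sampleDist]
    rw [hqk1, hpk1]
    exact logsum_aux Finset.univ (fun x => p k x * T x w) (fun x => q k x * Q x w)
      (fun x _ => mul_nonneg (hpnonneg k x) (hTnonneg x w))
      (fun x _ => mul_nonneg (hqnonneg k x) (hQnonneg x w))
      (fun x _ hb => by
        have hq0 : 0 < q k x := by
          rcases (mul_pos_iff.1 hb) with ⟨h1, _⟩ | ⟨h1, h2⟩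
          · exact h1
          · exact absurd h2 (not_lt.2 (hQnonneg x w))
        have hQ0 : 0 < Q x w := by
          rcases (mul_pos_iff.1 hb) with ⟨_, h2⟩ | ⟨h1, _⟩
          · exact h2
          · exact absurd h1 (not_lt.2 (hqnonneg k x))
        exact mul_pos (hppos x hq0.ne') (hTpos x w hQ0))
  -- Step B : rewrite the double sum
  have hB : ∑ w : Fin L → V, ∑ x : Fin L → V,
      (q k x * Q x w) * Real.log ((p k x * T x w) / (q k x * Q x w))
      = ∑ x : Fin L → V, q k x * (Real.log (p k x / q k x)
          + ∑ i ∈ Finset.univ.filter (fun i : Fin L => x i = mask),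
              G x0 x i * Real.log (T x (Function.update x i (x0 i)) / G x0 x i)) := by
    rw [Finset.sum_comm]
    refine Finset.sum_congr rfl fun x _ => ?_
    by_cases hq0 : q k x = 0
    · rw [hq0]
      simp
    · have hq0' : 0 < q k x := lt_of_le_of_ne (hqnonneg k x) (Ne.symm hq0)
      have hp0 : 0 < p k x := hppos x hq0
      -- pointwise split of each log
      have hpt : ∀ w : Fin L → V,
          (q k x * Q x w) * Real.log ((p k x * T x w) / (q k x * Q x w))
            = q k x * (Q x w * Real.log (p k x / q k x)
                + Q x w * Real.log (T x w / Q x w)) := by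
        intro w
        by_cases hQ0 : Q x w = 0
        · rw [hQ0]; simp
        · have hQ0' : 0 < Q x w := lt_of_le_of_ne (hQnonneg x w) (Ne.symm hQ0)
          have hT0 : 0 < T x w := hTpos x w hQ0'
          have : (p k x * T x w) / (q k x * Q x w)
              = (p k x / q k x) * (T x w / Q x w) := by
            field_simp
          rw [this, Real.log_mul (by positivity) (by positivity)]
          ring
      rw [Finset.sum_congr rfl fun w _ => hpt w, ← Finset.mul_sum]
      congr 1
      rw [Finset.sum_add_distrib]
      congr 1
      · -- ∑_w Q x w * log(p/q) = log(p/q)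
        have hmex : ∃ i, x i = mask := by
          obtain ⟨-, hcard⟩ := refDist_support τ D mask x0 hx0 k x hq0
          have hpos : 0 < (Finset.univ.filter fun i : Fin L => x i = mask).card := by omega
          obtain ⟨i, hi⟩ := Finset.card_pos.1 hpos
          rw [Finset.mem_filter] at hi
          exact ⟨i, hi.2⟩
        rw [fiberQ τ D mask x0 x (fun _ => Real.log (p k x / q k x)),
          ← Finset.sum_mul, Gtau_sum_one τ D mask x0 x hmex, one_mul]
      · -- ∑_w Q x w * log(T x w / Q x w)
        rw [fiberQ τ D mask x0 x (fun w => Real.log (T x w / Q x w))]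
        refine Finset.sum_congr rfl fun i hi => ?_
        rw [Finset.mem_filter] at hi
        have hQi : Q x (Function.update x i (x0 i)) = G x0 x i := by
          rw [hQ]
          simp only
          rw [filter_update_singleton mask x0 x hx0 i hi.2, Finset.sum_singleton]
        rw [hQi]
  calc (∑ x : Fin L → V, q k x * Real.log (p k x / q k x))
        + ∑ x : Fin L → V, q k x *
            ∑ i ∈ Finset.univ.filter (fun i : Fin L => x i = mask),
              G x0 x i * Real.log (T x (Function.update x i (x0 i)) / G x0 x i)
      = ∑ x : Fin L → V, q k x * (Real.log (p k x / q k x)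
          + ∑ i ∈ Finset.univ.filter (fun i : Fin L => x i = mask),
              G x0 x i * Real.log (T x (Function.update x i (x0 i)) / G x0 x i)) := by
        rw [← Finset.sum_add_distrib]
        exact Finset.sum_congr rfl fun x _ => by ring
    _ = ∑ w : Fin L → V, ∑ x : Fin L → V,
          (q k x * Q x w) * Real.log ((p k x * T x w) / (q k x * Q x w)) := hB.symm
    _ ≤ ∑ w : Fin L → V, q (k+1) w * Real.log (p (k+1) w / q (k+1) w) :=
        Finset.sum_le_sum fun w _ => hA w

lemma refDist_L_zero (hx0 : ∀ i, x0 i ≠ mask) (w : Fin L → V) (hw : w ≠ x0) :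
    refDist (Gtau τ D mask) mask x0 L w = 0 := by
  by_contra hne
  obtain ⟨hor, hcard⟩ := refDist_support τ D mask x0 hx0 L w hne
  apply hw
  funext i
  rcases hor i with h | h
  · exfalso
    have hmem : i ∈ Finset.univ.filter fun i : Fin L => w i = mask := by simp [h]
    have := Finset.card_pos.2 ⟨i, hmem⟩
    omega
  · exact h

lemma Psi_bound (hτ : 0 < τ) (hDpos : ∀ x i y, 0 < D x i y)
    (hD1 : ∀ x i, ∑ y, D x i y = 1) (hx0 : ∀ i, x0 i ≠ mask) (x : Fin L → V) :
    (∑ i ∈ Finset.univ.filter (fun i : Fin L => x i = mask),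
        Gtau τ D mask x0 x i * Real.log (D x i (x0 i)))
      + ∑ z : Fin L → V, (∏ j, D x j (z j)) *
          ∑ i ∈ Finset.univ.filter (fun i : Fin L => x i = mask),
            Gtau τ D mask x0 x i *
              Real.log (Ctau τ D mask x0 x /
                Ctau τ D mask (Function.update z i (x0 i)) x)
    ≤ ∑ i ∈ Finset.univ.filter (fun i : Fin L => x i = mask),
        Gtau τ D mask x0 x i *
          Real.log (stepKernel D (Gtau τ D mask) x (Function.update x i (x0 i)) /
            Gtau τ D mask x0 x i) := by
  have hswap : ∑ z : Fin L → V, (∏ j, D x j (z j)) *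
      ∑ i ∈ Finset.univ.filter (fun i : Fin L => x i = mask),
        Gtau τ D mask x0 x i *
          Real.log (Ctau τ D mask x0 x / Ctau τ D mask (Function.update z i (x0 i)) x)
      = ∑ i ∈ Finset.univ.filter (fun i : Fin L => x i = mask),
          Gtau τ D mask x0 x i *
            ∑ z : Fin L → V, (∏ j, D x j (z j)) *
              Real.log (Ctau τ D mask x0 x /
                Ctau τ D mask (Function.update z i (x0 i)) x) := by
    rw [Finset.sum_congr rfl fun z _ => Finset.mul_sum _ _ _, Finset.sum_comm]
    refine Finset.sum_congr rfl fun i _ => ?_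
    rw [Finset.mul_sum]
    exact Finset.sum_congr rfl fun z _ => by ring
  rw [hswap, ← Finset.sum_add_distrib]
  refine Finset.sum_le_sum fun i hi => ?_
  rw [Finset.mem_filter] at hi
  have hi2 := hi.2
  have hGpos : 0 < Gtau τ D mask x0 x i := Gtau_pos τ D mask x0 x i hi2
  have hTpos : 0 < stepKernel D (Gtau τ D mask) x (Function.update x i (x0 i)) :=
    stepKernel_pos τ D mask x0 hDpos x i hi2
  have hbd := logT_bound τ D mask x0 hτ hDpos hD1 hx0 x i hi2
  rw [← mul_add]
  refine mul_le_mul_of_nonneg_left ?_ hGpos.le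
  rw [Real.log_div hTpos.ne' hGpos.ne']
  exact hbd

lemma H_zero :
    ∑ x : Fin L → V, refDist (Gtau τ D mask) mask x0 0 x *
      Real.log (sampleDist D (Gtau τ D mask) mask 0 x /
        refDist (Gtau τ D mask) mask x0 0 x) = 0 := by
  refine Finset.sum_eq_zero fun x _ => ?_
  rw [refDist, sampleDist]
  by_cases hx : x = fun _ => mask
  · rw [if_pos hx]
    norm_num
  · rw [if_neg hx, zero_mul]

lemma H_telescope (hDpos : ∀ x i y, 0 < D x i y) (hD1 : ∀ x i, ∑ y, D x i y = 1)
    (hx0 : ∀ i, x0 i ≠ mask) :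
    ∀ n, n ≤ L →
      (∑ k ∈ Finset.range n, ∑ x : Fin L → V,
          refDist (Gtau τ D mask) mask x0 k x *
            ∑ i ∈ Finset.univ.filter (fun i : Fin L => x i = mask),
              Gtau τ D mask x0 x i *
                Real.log (stepKernel D (Gtau τ D mask) x (Function.update x i (x0 i)) /
                  Gtau τ D mask x0 x i))
      ≤ ∑ x : Fin L → V, refDist (Gtau τ D mask) mask x0 n x *
          Real.log (sampleDist D (Gtau τ D mask) mask n x /
            refDist (Gtau τ D mask) mask x0 n x) := by
  intro n
  induction n with
  | zero =>
    intro _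
    rw [Finset.range_zero, Finset.sum_empty, H_zero]
  | succ n ih =>
    intro hn
    rw [Finset.sum_range_succ]
    calc _ ≤ (∑ x : Fin L → V, refDist (Gtau τ D mask) mask x0 n x *
            Real.log (sampleDist D (Gtau τ D mask) mask n x /
              refDist (Gtau τ D mask) mask x0 n x))
          + ∑ x : Fin L → V, refDist (Gtau τ D mask) mask x0 n x *
              ∑ i ∈ Finset.univ.filter (fun i : Fin L => x i = mask),
                Gtau τ D mask x0 x i *
                  Real.log (stepKernel D (Gtau τ D mask) x (Function.update x i (x0 i)) /
                    Gtau τ D mask x0 x i) := by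
            exact add_le_add_left (ih (by omega)) _
      _ ≤ _ := main_step τ D mask x0 hDpos hD1 hx0 n (by omega)

end Aux

/-- **ELBO for the soft greedy (softmax) planner.**  For `τ > 0` and a denoiser `D`
(strictly positive, so that all logarithms are of positive quantities), with `p^τ`
the distribution of planner-guided sampling with `G^τ` and `r^τ_k(·; x₀)` the step-`k`
law of the reference chain driven by `G^τ(x₀, ·)`, for any mask-free `x₀`:
`log p^τ(x₀) ≥ 𝓔₁(x₀) + 𝓔₂(x₀)` with
`𝓔₁(x₀) = L·E_k E_{x_k ~ r^τ_k}[Σ_{i : x_k^i=m} Cat(i;G^τ(x₀,x_k)) log Cat(x₀^i;D^i(x_k))]`,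
`𝓔₂(x₀) = L·E_k E_{x_k ~ r^τ_k} E_{z ~ D(x_k)}[Σ_{i : x_k^i=m} Cat(i;G^τ(x₀,x_k)) log(C^τ(x₀,x_k)/C^τ(z^{-i,x₀^i},x_k))]`. -/
theorem soft_greedy_planner_elbo
    {V : Type*} [Fintype V] [DecidableEq V] {L : ℕ}
    (mask : V) (τ : ℝ) (hτ : 0 < τ)
    (D : (Fin L → V) → Fin L → V → ℝ)
    (hDpos : ∀ x i y, 0 < D x i y) (hD1 : ∀ x i, ∑ y, D x i y = 1)
    (x0 : Fin L → V) (hx0 : ∀ i, x0 i ≠ mask) :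
    Real.log (sampleDist D (Gtau τ D mask) mask L x0)
      ≥ (L : ℝ) * ((L : ℝ)⁻¹ * ∑ k ∈ Finset.range L, ∑ x : Fin L → V,
          refDist (Gtau τ D mask) mask x0 k x *
            ∑ i ∈ Finset.univ.filter (fun i : Fin L => x i = mask),
              Gtau τ D mask x0 x i * Real.log (D x i (x0 i)))
        + (L : ℝ) * ((L : ℝ)⁻¹ * ∑ k ∈ Finset.range L, ∑ x : Fin L → V,
            refDist (Gtau τ D mask) mask x0 k x *
              ∑ z : Fin L → V, (∏ j, D x j (z j)) *
                ∑ i ∈ Finset.univ.filter (fun i : Fin L => x i = mask),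
                  Gtau τ D mask x0 x i *
                    Real.log (Ctau τ D mask x0 x /
                      Ctau τ D mask (Function.update z i (x0 i)) x)) := by
  rcases Nat.eq_zero_or_pos L with hL0 | hLpos
  · subst hL0
    have hx0m : x0 = fun _ => mask := funext fun i => Fin.elim0 i
    rw [hx0m]
    norm_num [sampleDist]
  · have hL : (L : ℝ) ≠ 0 := Nat.cast_ne_zero.2 (by omega)
    have hfix : ∀ S : ℝ, (L : ℝ) * ((L : ℝ)⁻¹ * S) = S := fun S => by field_simp
    rw [hfix, hfix, ge_iff_le]
    have hHL : ∑ x : Fin L → V, refDist (Gtau τ D mask) mask x0 L x *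
        Real.log (sampleDist D (Gtau τ D mask) mask L x /
          refDist (Gtau τ D mask) mask x0 L x)
        = Real.log (sampleDist D (Gtau τ D mask) mask L x0) := by
      rw [Finset.sum_eq_single_of_mem x0 (Finset.mem_univ x0)
        (fun w _ hw => by rw [refDist_L_zero τ D mask x0 hx0 w hw, zero_mul])]
      rw [refDist_L τ D mask x0 hx0, one_mul, div_one]
    rw [← hHL]
    calc (∑ k ∈ Finset.range L, ∑ x : Fin L → V,
            refDist (Gtau τ D mask) mask x0 k x *
              ∑ i ∈ Finset.univ.filter (fun i : Fin L => x i = mask),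
                Gtau τ D mask x0 x i * Real.log (D x i (x0 i)))
          + ∑ k ∈ Finset.range L, ∑ x : Fin L → V,
              refDist (Gtau τ D mask) mask x0 k x *
                ∑ z : Fin L → V, (∏ j, D x j (z j)) *
                  ∑ i ∈ Finset.univ.filter (fun i : Fin L => x i = mask),
                    Gtau τ D mask x0 x i *
                      Real.log (Ctau τ D mask x0 x /
                        Ctau τ D mask (Function.update z i (x0 i)) x)
        = ∑ k ∈ Finset.range L, ∑ x : Fin L → V,
            (refDist (Gtau τ D mask) mask x0 k x *
              (∑ i ∈ Finset.univ.filter (fun i : Fin L => x i = mask),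
                Gtau τ D mask x0 x i * Real.log (D x i (x0 i)))
            + refDist (Gtau τ D mask) mask x0 k x *
                ∑ z : Fin L → V, (∏ j, D x j (z j)) *
                  ∑ i ∈ Finset.univ.filter (fun i : Fin L => x i = mask),
                    Gtau τ D mask x0 x i *
                      Real.log (Ctau τ D mask x0 x /
                        Ctau τ D mask (Function.update z i (x0 i)) x)) := by
          rw [← Finset.sum_add_distrib]
          exact Finset.sum_congr rfl fun k _ => (Finset.sum_add_distrib).symm
      _ ≤ ∑ k ∈ Finset.range L, ∑ x : Fin L → V,
            refDist (Gtau τ D mask) mask x0 k x *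
              ∑ i ∈ Finset.univ.filter (fun i : Fin L => x i = mask),
                Gtau τ D mask x0 x i *
                  Real.log (stepKernel D (Gtau τ D mask) x (Function.update x i (x0 i)) /
                    Gtau τ D mask x0 x i) := by
          refine Finset.sum_le_sum fun k _ => Finset.sum_le_sum fun x _ => ?_
          rw [← mul_add]
          exact mul_le_mul_of_nonneg_left
            (Psi_bound τ D mask x0 hτ hDpos hD1 hx0 x)
            (refDist_nonneg τ D mask x0 k x)
      _ ≤ _ := H_telescope τ D mask x0 hDpos hD1 hx0 L le_rfl
end
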